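/- Let A ∈ ℝ^{m×n}, λ ≥ 0, and 1 ≤ k < n. Let σ_1 ≥ σ_2 ≥ … ≥ σ_n ≥ 0 be the eigenvalues of AᵀA in nonincreasing order. Then det(AᵀA + λI) ≤ (σ_1 + λ)^k · ((σ_{k+1}+⋯+σ_n)/(n−k) + λ)^{n−k}. Equivalently, det(AᵀA + λI) ≤ (‖A‖₂² + λ)^k · (‖A−A_k‖_F²/(n−k) + λ)^{n−k}, where ‖A−A_k‖_F² = σ_{k+1}+⋯+σ_n is the squared Frobenius error of the best rank-k approximation of A. -/

import Mathlib

open Matrix Finset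

lemma det_herm_add_smul {n : ℕ} (H : Matrix (Fin n) (Fin n) ℝ) (hH : H.IsHermitian) (lam : ℝ) :
    (H + lam • 1).det = ∏ i, (hH.eigenvalues i + lam) := by
  have hU := (Matrix.mem_unitaryGroup_iff).mp (hH.eigenvectorUnitary).2
  set U : Matrix (Fin n) (Fin n) ℝ := (hH.eigenvectorUnitary : Matrix (Fin n) (Fin n) ℝ)
  have h1 : H + lam • 1 = U * (diagonal (fun i => hH.eigenvalues i + lam)) * star U := by
    have hsp := hH.spectral_theorem
    rw [Unitary.conjStarAlgAut_apply] at hsp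
    have h2 : (lam • (1 : Matrix (Fin n) (Fin n) ℝ)) = U * (lam • 1) * star U := by
      rw [Matrix.mul_smul, Matrix.smul_mul, Matrix.mul_one, hU]
    calc H + lam • 1 = U * diagonal (RCLike.ofReal ∘ hH.eigenvalues) * star U
          + U * (lam • 1) * star U := by rw [← hsp, ← h2]
      _ = U * (diagonal (RCLike.ofReal ∘ hH.eigenvalues) + lam • 1) * star U := by
          rw [Matrix.mul_add, Matrix.add_mul]
      _ = _ := by
          congr 2
          rw [Matrix.smul_one_eq_diagonal, diagonal_add]
          rfl
  have hU2 : star U * U = 1 := Matrix.mem_unitaryGroup_iff'.mp (hH.eigenvectorUnitary).2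
  rw [h1, det_mul, det_mul, mul_comm, ← mul_assoc, ← det_mul, hU2, det_one, one_mul, det_diagonal]

/-- **AM–GM determinant bound.**
If `σ 0 ≥ σ 1 ≥ … ≥ σ (n-1) ≥ 0` are the eigenvalues of `AᵀA` in nonincreasing order,
`λ ≥ 0`, and `1 ≤ k < n`, then
`det(AᵀA + λI) ≤ (σ₁ + λ)^k · ((σ_{k+1}+⋯+σ_n)/(n-k) + λ)^(n-k)`. -/
theorem det_amgm_bound (m n k : ℕ) (hk1 : 1 ≤ k) (hkn : k < n)
    (lam : ℝ) (hlam : 0 ≤ lam)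
    (A : Matrix (Fin m) (Fin n) ℝ)
    (σ : Fin n → ℝ) (hmono : Antitone σ) (e : Fin n ≃ Fin n)
    (hσ : ∀ i, σ i = (Matrix.isHermitian_conjTranspose_mul_self A).eigenvalues (e i)) :
    (Aᵀ * A + lam • 1).det ≤
      (σ ⟨0, by omega⟩ + lam) ^ k *
        ((∑ i : Fin n, if k ≤ (i : ℕ) then σ i else 0) / ((n - k : ℕ) : ℝ) + lam)
          ^ (n - k) := by
  classical
  have hH := Matrix.isHermitian_conjTranspose_mul_self A
  have hσ0 : ∀ i, 0 ≤ σ i := fun i => by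
    rw [hσ i]; exact Matrix.eigenvalues_conjTranspose_mul_self_nonneg A _
  have hdet : (Aᵀ * A + lam • 1).det = ∏ i, (σ i + lam) := by
    rw [← conjTranspose_eq_transpose_of_trivial A, det_herm_add_smul (Aᴴ * A) hH lam,
      ← Equiv.prod_comp e (fun j => hH.eigenvalues j + lam)]
    exact (Finset.prod_congr rfl fun i _ => by rw [hσ i]).symm
  rw [hdet]
  set s₁ : Finset (Fin n) := {i | (i : ℕ) < k} with hs₁
  set s₂ : Finset (Fin n) := {i | ¬ (i : ℕ) < k} with hs₂
  have hsplit : ∏ i, (σ i + lam) = (∏ i ∈ s₁, (σ i + lam)) * ∏ i ∈ s₂, (σ i + lam) :=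
    (Finset.prod_filter_mul_prod_filter_not univ _ _).symm
  have hcard1 : s₁.card = k := by
    have : s₁ = Finset.Iio ⟨k, hkn⟩ := by ext i; simp [hs₁, Fin.lt_def]
    rw [this, Fin.card_Iio]
  have hcard2 : s₂.card = n - k := by
    have : s₂ = Finset.Ici ⟨k, hkn⟩ := by ext i; simp [hs₂, Fin.le_def]
    rw [this, Fin.card_Ici]
  -- bound on the first factor
  have hb1 : ∏ i ∈ s₁, (σ i + lam) ≤ (σ ⟨0, by omega⟩ + lam) ^ k := by
    calc ∏ i ∈ s₁, (σ i + lam) ≤ ∏ _i ∈ s₁, (σ ⟨0, by omega⟩ + lam) := by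
          apply Finset.prod_le_prod
          · exact fun i _ => add_nonneg (hσ0 i) hlam
          · exact fun i _ => add_le_add_left (hmono (by simp [Fin.le_def])) lam
      _ = (σ ⟨0, by omega⟩ + lam) ^ k := by simp only [Finset.prod_const, hcard1]
  -- AM–GM bound on the second factor
  have hc : ((n - k : ℕ) : ℝ) ≠ 0 := by
    have : 0 < n - k := by omega
    positivity
  have hcpos : (0 : ℝ) < ((n - k : ℕ) : ℝ) := by
    have : 0 < n - k := by omega
    positivity
  have hz : ∀ i ∈ s₂, 0 ≤ σ i + lam := fun i _ => add_nonneg (hσ0 i) hlam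
  have hsum1 : ∑ _i ∈ s₂, (1 : ℝ) = ((n - k : ℕ) : ℝ) := by
    rw [Finset.sum_const, hcard2, nsmul_eq_mul, mul_one]
  have hgm := Real.geom_mean_le_arith_mean s₂ (fun _ => (1 : ℝ)) (fun i => σ i + lam)
    (fun _ _ => zero_le_one) (by rw [hsum1]; exact hcpos) hz
  simp only [Real.rpow_one, one_mul, hsum1] at hgm
  set P : ℝ := ∏ i ∈ s₂, (σ i + lam) with hP
  set S : ℝ := ∑ i ∈ s₂, (σ i + lam) with hS
  have hPnn : 0 ≤ P := Finset.prod_nonneg hz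
  have hb2 : P ≤ (S / ((n - k : ℕ) : ℝ)) ^ (n - k) := by
    have h1 : P = (P ^ (((n - k : ℕ) : ℝ))⁻¹) ^ ((n - k : ℕ) : ℝ) := by
      rw [← Real.rpow_mul hPnn, inv_mul_cancel₀ hc, Real.rpow_one]
    calc P = (P ^ (((n - k : ℕ) : ℝ))⁻¹) ^ ((n - k : ℕ) : ℝ) := h1
      _ ≤ (S / ((n - k : ℕ) : ℝ)) ^ ((n - k : ℕ) : ℝ) :=
          Real.rpow_le_rpow (Real.rpow_nonneg hPnn _) hgm hcpos.le
      _ = (S / ((n - k : ℕ) : ℝ)) ^ (n - k) := Real.rpow_natCast _ _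
  have hSeq : S / ((n - k : ℕ) : ℝ) =
      (∑ i : Fin n, if k ≤ (i : ℕ) then σ i else 0) / ((n - k : ℕ) : ℝ) + lam := by
    have h2 : S = (∑ i : Fin n, if k ≤ (i : ℕ) then σ i else 0) + ((n - k : ℕ) : ℝ) * lam := by
      rw [hS, Finset.sum_add_distrib, Finset.sum_const, hcard2, nsmul_eq_mul]
      congr 1
      rw [Finset.sum_filter]
      exact Finset.sum_congr rfl fun i _ => by simp [not_lt]
    rw [h2, add_div, mul_comm, mul_div_assoc, div_self hc, mul_one]
  rw [hsplit]
  have hmean_nn : 0 ≤ S / ((n - k : ℕ) : ℝ) :=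
    div_nonneg (Finset.sum_nonneg hz) hcpos.le
  calc (∏ i ∈ s₁, (σ i + lam)) * P
      ≤ (σ ⟨0, by omega⟩ + lam) ^ k * (S / ((n - k : ℕ) : ℝ)) ^ (n - k) := by
        apply mul_le_mul hb1 hb2 hPnn
        exact pow_nonneg (add_nonneg (hσ0 _) hlam) k
    _ = _ := by rw [hSeq]
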